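/- arXiv:2003.09658 — 2 statements merged into one kernel-verified Lean document; each statement's English description precedes it below -/
import Mathlib

section
/- There exist exponents l_1, …, l_n ≥ 0 such that the coefficient of the monomial ∏_{j=1}^{n} v_j^{l_j} in the Fermat reduction P' of P is a nonzero polynomial in Z_p[e_1, …, e_m]; equivalently, P' is not the zero polynomial, i.e., there is a point (γ_{v_1}, …, γ_{v_n}, γ_{e_1}, …, γ_{e_m}) ∈ Z_p^{n+m} at which P does not vanish. -/
open MvPolynomial
open scoped Classical

noncomputable section

/-- Exponent reduction implementing Fermat's relation `x^p ≡ x`: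
`0 ↦ 0` and `k ↦ ((k-1) mod (p-1)) + 1` for `k ≥ 1`. -/
def fermatExp (p k : ℕ) : ℕ := if k = 0 then 0 else (k - 1) % (p - 1) + 1

lemma fermatExp_zero (p : ℕ) : fermatExp p 0 = 0 := by simp [fermatExp]

/-- The Fermat reduction `F'` of a multivariate polynomial over `Z_p`: every exponent is
reduced using `x^p ≡ x`, so that the result has degree `≤ p-1` in each variable. -/
def fermatReduce {σ : Type*} (p : ℕ) (F : MvPolynomial σ (ZMod p)) : MvPolynomial σ (ZMod p) :=
  F.support.sum fun d => monomial (d.mapRange (fermatExp p) (fermatExp_zero p)) (F.coeff d)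

/-- Univariate Fermat reduction. -/
def fermatReduceUni (p : ℕ) (f : Polynomial (ZMod p)) : Polynomial (ZMod p) :=
  f.support.sum fun k => Polynomial.monomial (fermatExp p k) (f.coeff k)

/-- `N_e(v_i)`: the edges incident to the vertex `i`. -/
def incidentE {n m : ℕ} (ed : Fin m → Sym2 (Fin n)) (i : Fin n) : Finset (Fin m) :=
  Finset.univ.filter fun k => i ∈ ed k

/-- `N_i(v_i)`: the neighbours of `v_i` other than `v_1, …, v_{i-1}`. -/
def laterNbrs {n m : ℕ} (ed : Fin m → Sym2 (Fin n)) (i : Fin n) : Finset (Fin n) :=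
  Finset.univ.filter fun j => (∃ k, ed k = s(i, j)) ∧ ¬ j < i

/-- `N_i(e_i)`: the edges sharing an endpoint with `e_i`, other than `e_1, …, e_{i-1}`. -/
def laterAdjE {n m : ℕ} (ed : Fin m → Sym2 (Fin n)) (k : Fin m) : Finset (Fin m) :=
  Finset.univ.filter fun l => (l ≠ k ∧ ∃ x, x ∈ ed k ∧ x ∈ ed l) ∧ ¬ l < k

/-- The polynomial `P` (vertex variables are `Sum.inl`, edge variables are `Sum.inr`). -/
def Ppoly (n m Δ p : ℕ) (ed : Fin m → Sym2 (Fin n)) : MvPolynomial (Fin n ⊕ Fin m) (ZMod p) :=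
  ∏ i : Fin n,
    ((∏ j ∈ laterNbrs ed i, (X (Sum.inl i) - X (Sum.inl j))) *
      (∏ k ∈ incidentE ed i, (X (Sum.inl i) - X (Sum.inr k))) *
      (∏ l ∈ Finset.Icc (Δ + 2) p, (X (Sum.inl i) - C (l : ZMod p))))

/-- The coefficient of the vertex-monomial `∏ v_j ^ (d j)` of `F`, as a polynomial in the
edge variables. -/
def vCoeff {n m p : ℕ} (F : MvPolynomial (Fin n ⊕ Fin m) (ZMod p)) (d : Fin n →₀ ℕ) :
    MvPolynomial (Fin m) (ZMod p) :=
  ((sumAlgEquiv (ZMod p) (Fin n) (Fin m)) F).coeff d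

/-- The colour set `K = {1, …, Δ+1} ∪ {α} ⊆ Z_p`. -/
def colorSet (Δ p : ℕ) (α : ZMod p) : Finset (ZMod p) :=
  insert α ((Finset.Icc 1 (Δ + 1)).image fun l : ℕ => (l : ZMod p))

/-- The polynomial `E^k`. -/
def Epoly {n m : ℕ} (Δ p : ℕ) [NeZero p] (ed : Fin m → Sym2 (Fin n)) (α : ZMod p) (k : Fin m) :
    MvPolynomial (Fin m) (ZMod p) :=
  (∏ l ∈ laterAdjE ed k, (X k - X l)) *
    (∏ c ∈ Finset.univ \ colorSet Δ p α, (X k - C c))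

/-- `Q_i = C^{P'} · E^1 ⋯ E^i`; here `i` is the number of edge factors, so `Qpoly … i`
is the paper's `Q_i` (and `Qpoly … 0 = C^{P'}`). -/
def Qpoly {n m : ℕ} (Δ p : ℕ) [NeZero p] (ed : Fin m → Sym2 (Fin n)) (α : ZMod p)
    (CP : MvPolynomial (Fin m) (ZMod p)) (i : ℕ) : MvPolynomial (Fin m) (ZMod p) :=
  CP * ∏ k ∈ Finset.univ.filter (fun k : Fin m => (k : ℕ) < i), Epoly Δ p ed α k

/-- Fermat reduction in all variables except the variable `j`. -/
def fermatReduceExcept {m : ℕ} (p : ℕ) (j : Fin m) (F : MvPolynomial (Fin m) (ZMod p)) :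
    MvPolynomial (Fin m) (ZMod p) :=
  F.support.sum fun d =>
    monomial (Finsupp.filter (fun k => k = j) d +
      Finsupp.mapRange (fermatExp p) (fermatExp_zero p) (Finsupp.filter (fun k => k ≠ j) d))
      (F.coeff d)

/-- Given an exponent vector `d0` for the variables other than `j`, the coefficient in `F` of the
monomial `∏_{k ≠ j} X_k ^ (d0 k)`, as a univariate polynomial in the variable `j`. -/
def coeffAt {m p : ℕ} (j : Fin m) (d0 : Fin m →₀ ℕ) (F : MvPolynomial (Fin m) (ZMod p)) :
    Polynomial (ZMod p) :=
  (F.support.filter fun d => ∀ k, k ≠ j → d k = d0 k).sum fun d =>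
    Polynomial.monomial (d j) (F.coeff d)


lemma pow_fermatExp {p : ℕ} [Fact p.Prime] (x : ZMod p) (k : ℕ) :
    x ^ fermatExp p k = x ^ k := by
  unfold fermatExp
  split_ifs with h
  · subst h; rfl
  · rcases eq_or_ne x 0 with rfl | hx
    · rw [zero_pow (by omega), zero_pow h]
    · have h1 : x ^ (p - 1) = 1 := ZMod.pow_card_sub_one_eq_one hx
      calc x ^ ((k - 1) % (p - 1) + 1)
          = (x ^ (p - 1)) ^ ((k - 1) / (p - 1)) * x ^ ((k - 1) % (p - 1) + 1) := by
            rw [h1, one_pow, one_mul]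
        _ = x ^ ((p - 1) * ((k - 1) / (p - 1)) + ((k - 1) % (p - 1) + 1)) := by
            rw [← pow_mul, ← pow_add]
        _ = x ^ k := by
            congr 1
            have hp2 : 2 ≤ p := (Fact.out (p := p.Prime)).two_le
            have := Nat.div_add_mod (k - 1) (p - 1)
            omega

lemma eval_fermatReduce {σ : Type*} {p : ℕ} [Fact p.Prime] (F : MvPolynomial σ (ZMod p))
    (γ : σ → ZMod p) : eval γ (fermatReduce p F) = eval γ F := by
  conv_rhs => rw [← support_sum_monomial_coeff F]
  rw [fermatReduce, map_sum, map_sum]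
  refine Finset.sum_congr rfl fun d _ => ?_
  rw [eval_monomial, eval_monomial]
  congr 1
  rw [Finsupp.prod_mapRange_index (fun i => pow_zero _)]
  exact Finsupp.prod_congr fun i _ => pow_fermatExp _ _

lemma exists_coloring (n m Δ : ℕ) (hm : 1 ≤ m) (ed : Fin m → Sym2 (Fin n))
    (hsimple : ∀ k, ¬ (ed k).IsDiag)
    (hΔ : ∀ i, (incidentE ed i).card ≤ Δ) :
    ∃ c : Fin n → ℕ, (∀ i, c i ∈ Finset.Icc 1 (Δ + 1)) ∧
      ∀ i j : Fin n, (∃ k, ed k = s(i, j)) → i ≠ j → c i ≠ c j := by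
  have k0 : Fin m := ⟨0, hm⟩
  have hnb : ∀ i : Fin n,
      (Finset.univ.filter fun j : Fin n => ∃ k, ed k = s(i, j)).card ≤ Δ := by
    intro i
    refine le_trans (Finset.card_le_card_of_injOn
      (fun j => if h : ∃ k, ed k = s(i, j) then h.choose else k0) ?_ ?_) (hΔ i)
    · intro j hj
      simp only [Finset.mem_coe, Finset.mem_filter, Finset.mem_univ, true_and] at hj
      simp only [hj, dif_pos]
      have := hj.choose_spec
      simp only [incidentE, Finset.mem_coe, Finset.mem_filter, Finset.mem_univ, true_and, this]
      exact Sym2.mem_mk_left i j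
    · intro a ha b hb hab
      simp only [Finset.coe_filter, Set.mem_setOf_eq, Finset.mem_univ, true_and] at ha hb
      simp only [ha, hb, dif_pos] at hab
      have h1 := ha.choose_spec
      have h2 := hb.choose_spec
      rw [hab, h2] at h1
      rcases Sym2.eq_iff.mp h1 with ⟨_, h⟩ | ⟨h1', h2'⟩
      · exact h.symm
      · rw [← h1', h2']
  suffices H : ∀ t : ℕ, ∃ c : Fin n → ℕ, (∀ i, c i ∈ Finset.Icc 1 (Δ + 1)) ∧
      ∀ i j : Fin n, (i : ℕ) < t → (j : ℕ) < t → (∃ k, ed k = s(i, j)) → i ≠ j → c i ≠ c j by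
    obtain ⟨c, h1, h2⟩ := H n
    exact ⟨c, h1, fun i j hk hij => h2 i j i.isLt j.isLt hk hij⟩
  intro t
  induction t with
  | zero => exact ⟨fun _ => 1, fun i => by simp, fun i j hi => by omega⟩
  | succ t ih =>
    obtain ⟨c, h1, h2⟩ := ih
    by_cases ht : t < n
    · set v : Fin n := ⟨t, ht⟩ with hv
      set S := (Finset.univ.filter fun j : Fin n => ∃ k, ed k = s(v, j)).image c with hS
      have hScard : S.card ≤ Δ := le_trans Finset.card_image_le (hnb v)
      have hne : (Finset.Icc 1 (Δ + 1) \ S).Nonempty := by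
        rw [← Finset.card_pos]
        have := Finset.le_card_sdiff S (Finset.Icc 1 (Δ + 1))
        rw [Nat.card_Icc] at this
        omega
      obtain ⟨x, hx⟩ := hne
      rw [Finset.mem_sdiff] at hx
      refine ⟨Function.update c v x, ?_, ?_⟩
      · intro i
        rcases eq_or_ne i v with rfl | hiv
        · rw [Function.update_self]; exact hx.1
        · rw [Function.update_of_ne hiv]; exact h1 i
      · intro i j hi hj hk hij
        have hmemS : ∀ w : Fin n, (∃ k, ed k = s(v, w)) → c w ∈ S := by
          intro w hw
          exact Finset.mem_image_of_mem c (by simpa using hw)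
        rcases eq_or_ne i v with rfl | hiv
        · have hjv : j ≠ v := hij.symm
          rw [Function.update_self, Function.update_of_ne hjv]
          intro hcon
          exact hx.2 (hcon ▸ hmemS j hk)
        · rcases eq_or_ne j v with rfl | hjv
          · rw [Function.update_self, Function.update_of_ne hiv]
            intro hcon
            refine hx.2 (hcon ▸ hmemS i ?_)
            obtain ⟨k, hk⟩ := hk
            exact ⟨k, by rw [hk, Sym2.eq_swap]⟩
          · rw [Function.update_of_ne hiv, Function.update_of_ne hjv]
            have hi' : (i : ℕ) < t := by
              have : (i : ℕ) ≠ t := fun h => hiv (Fin.ext h)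
              omega
            have hj' : (j : ℕ) < t := by
              have : (j : ℕ) ≠ t := fun h => hjv (Fin.ext h)
              omega
            exact h2 i j hi' hj' hk hij
    · exact ⟨c, h1, fun i j hi hj => h2 i j (by omega) (by omega)⟩

/-- Theorem 3.1 of the paper. There are exponents `l_1, …, l_n ≥ 0` (packaged
as `d : Fin n →₀ ℕ`) such that the coefficient of `∏ v_j ^ (d j)` in the Fermat reduction `P'`
of `P` is a nonzero polynomial in the edge variables; equivalently, there is a point of
`Z_p^{n+m}` at which `P` does not vanish. -/
theorem statement0 (n m Δ p : ℕ) [Fact p.Prime]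
    (hm : 1 ≤ m) (hp : m ^ 2 * (2 * Δ + 2) ≤ p)
    (ed : Fin m → Sym2 (Fin n)) (hinj : Function.Injective ed)
    (hsimple : ∀ k, ¬ (ed k).IsDiag)
    (hΔ : ∀ i, (incidentE ed i).card ≤ Δ)
    (hΔmax : ∃ i, (incidentE ed i).card = Δ) :
    (∃ d : Fin n →₀ ℕ, vCoeff (fermatReduce p (Ppoly n m Δ p ed)) d ≠ 0) ∧
      ∃ γ : Fin n ⊕ Fin m → ZMod p, eval γ (Ppoly n m Δ p ed) ≠ 0 := by
  obtain ⟨c, hc1, hc2⟩ := exists_coloring n m Δ hm ed hsimple hΔ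
  have hp2 : 2 * Δ + 2 ≤ p := by
    calc 2 * Δ + 2 = 1 * (2 * Δ + 2) := by ring
    _ ≤ m ^ 2 * (2 * Δ + 2) := Nat.mul_le_mul_right _ (Nat.one_le_pow _ _ hm)
    _ ≤ p := hp
  have hΔp : Δ + 1 < p := by omega
  set γ : Fin n ⊕ Fin m → ZMod p := Sum.elim (fun i => (c i : ZMod p)) (fun _ => 0) with hγ
  have hinjcast : ∀ a b : ℕ, a < p → b < p → (a : ZMod p) = (b : ZMod p) → a = b := by
    intro a b ha hb h
    have h1 := ZMod.val_cast_of_lt ha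
    have h2 := ZMod.val_cast_of_lt hb
    rw [h] at h1
    omega
  have hkey : ∀ i : Fin n, (c i : ZMod p) ≠ 0 := by
    intro i h
    have hci := hc1 i
    rw [Finset.mem_Icc] at hci
    have : ((0 : ℕ) : ZMod p) = 0 := Nat.cast_zero
    have := hinjcast (c i) 0 (by omega) (by omega) (by rw [h, Nat.cast_zero])
    omega
  have hev : eval γ (Ppoly n m Δ p ed) ≠ 0 := by
    rw [Ppoly, map_prod]
    rw [Finset.prod_ne_zero_iff]
    intro i _
    simp only [map_mul, map_prod, map_sub, eval_X, eval_C]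
    refine mul_ne_zero (mul_ne_zero ?_ ?_) ?_
    · rw [Finset.prod_ne_zero_iff]
      intro j hj
      simp only [laterNbrs, Finset.mem_filter, Finset.mem_univ, true_and] at hj
      obtain ⟨⟨k, hk⟩, _⟩ := hj
      have hij : i ≠ j := by
        rintro rfl
        exact hsimple k (by rw [hk]; exact Sym2.mk_isDiag_iff.mpr rfl)
      have hcij : c i ≠ c j := hc2 i j ⟨k, hk⟩ hij
      have hci := hc1 i; have hcj := hc1 j
      rw [Finset.mem_Icc] at hci hcj
      simp only [hγ, Sum.elim_inl]
      exact sub_ne_zero_of_ne fun h =>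
        hcij (hinjcast (c i) (c j) (by omega) (by omega) h)
    · rw [Finset.prod_ne_zero_iff]
      intro k _
      simp only [hγ, Sum.elim_inl, Sum.elim_inr, sub_zero]
      exact hkey i
    · rw [Finset.prod_ne_zero_iff]
      intro l hl
      rw [Finset.mem_Icc] at hl
      simp only [hγ, Sum.elim_inl]
      refine sub_ne_zero_of_ne fun h => ?_
      rcases eq_or_lt_of_le hl.2 with rfl | hlp
      · rw [ZMod.natCast_self] at h
        exact hkey i h
      · have hci := hc1 i
        rw [Finset.mem_Icc] at hci
        have := hinjcast (c i) l (by omega) hlp h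
        omega
  have hfr : eval γ (fermatReduce p (Ppoly n m Δ p ed)) ≠ 0 := by
    rw [eval_fermatReduce]; exact hev
  have hne : fermatReduce p (Ppoly n m Δ p ed) ≠ 0 := fun h => hfr (by rw [h, map_zero])
  constructor
  · have hne2 : (sumAlgEquiv (ZMod p) (Fin n) (Fin m)) (fermatReduce p (Ppoly n m Δ p ed)) ≠ 0 := by
      intro h
      exact hne ((sumAlgEquiv (ZMod p) (Fin n) (Fin m)).injective (by rw [h, map_zero]))
    obtain ⟨d, hd⟩ := ne_zero_iff.mp hne2
    exact ⟨d, hd⟩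
  · exact ⟨γ, hev⟩

end
end

section
/- For every 1 ≤ i ≤ m, the Fermat reduction of Z_i is not the zero polynomial; equivalently, Z_i does not vanish at every point of Z_p^m. -/
open MvPolynomial
open scoped Classical

noncomputable section

section Aux

variable {σ R : Type*} [CommRing R]

lemma aux_mem_support_le_degreeOf {f : MvPolynomial σ R} {d : σ →₀ ℕ} (hd : d ∈ f.support)
    (i : σ) : d i ≤ f.degreeOf i := degreeOf_le_iff.mp le_rfl d hd

lemma aux_degreeOf_sub_le (n : σ) (f g : MvPolynomial σ R) :
    degreeOf n (f - g) ≤ max (degreeOf n f) (degreeOf n g) := by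
  rw [sub_eq_add_neg]
  refine (degreeOf_add_le n f (-g)).trans ?_
  have hneg : degreeOf n (-g) ≤ degreeOf n g := by
    refine degreeOf_le_iff.mpr fun d hd => ?_
    rw [support_neg] at hd
    exact aux_mem_support_le_degreeOf hd n
  exact max_le_max le_rfl hneg

lemma aux_degreeOf_X_sub_X_le [Nontrivial R] (n a b : σ) :
    degreeOf n ((X a - X b : MvPolynomial σ R)) ≤ if n = a ∨ n = b then 1 else 0 := by
  refine (aux_degreeOf_sub_le n _ _).trans ?_
  rw [degreeOf_X, degreeOf_X]
  split_ifs with h1 h2 h2 <;> simp_all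

lemma aux_degreeOf_X_sub_C_le [Nontrivial R] (n a : σ) (c : R) :
    degreeOf n ((X a - C c : MvPolynomial σ R)) ≤ if n = a then 1 else 0 := by
  refine (aux_degreeOf_sub_le n _ _).trans ?_
  rw [degreeOf_X, degreeOf_C]
  simp

lemma aux_degreeOf_monomial_le (d : σ →₀ ℕ) (a : R) (i : σ) :
    degreeOf i (monomial d a) ≤ d i := by
  rcases eq_or_ne a 0 with rfl | ha
  · simp
  · rw [degreeOf_monomial_eq d i ha]

lemma aux_sumElim_eq_zero_iff {α β γ : Type*} [Zero γ] (d : α →₀ γ) (e : β →₀ γ) :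
    d.sumElim e = 0 ↔ d = 0 ∧ e = 0 := by
  constructor
  · intro h
    constructor <;> ext x
    · have := DFunLike.congr_fun h (Sum.inl x); simpa using this
    · have := DFunLike.congr_fun h (Sum.inr x); simpa using this
  · rintro ⟨rfl, rfl⟩; ext (x | x) <;> simp

lemma aux_coeff_coeff_sumToIter {σ₁ σ₂ : Type*} (F : MvPolynomial (σ₁ ⊕ σ₂) R)
    (d : σ₁ →₀ ℕ) (e : σ₂ →₀ ℕ) :
    coeff e (coeff d (sumToIter R σ₁ σ₂ F)) = coeff (d.sumElim e) F := by
  induction F using MvPolynomial.induction_on generalizing d e with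
  | C a =>
      have hrhs : coeff (d.sumElim e) (C a : MvPolynomial (σ₁ ⊕ σ₂) R) =
          if 0 = d ∧ 0 = e then a else 0 := by
        rw [coeff_C]
        congr 1
        simp only [eq_comm (b := d.sumElim e), eq_comm (b := d), eq_comm (b := e), eq_iff_iff]
        exact aux_sumElim_eq_zero_iff d e
      rw [sumToIter_C, hrhs, coeff_C]
      split_ifs with h1 h2 <;> simp_all [coeff_C]
  | add f g hf hg => simp [map_add, coeff_add, hf, hg]
  | mul_X f i hf =>
      cases i with
      | inl b =>
          rw [map_mul, sumToIter_Xl, coeff_mul_X', coeff_mul_X']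
          have hmem : Sum.inl b ∈ (d.sumElim e).support ↔ b ∈ d.support := by
            simp [Finsupp.mem_support_iff]
          split_ifs with h1 h2 h2
          · rw [hf]
            congr 1
            ext (x | x) <;> simp [Finsupp.single_apply]
          · exact absurd (hmem.mpr h1) h2
          · exact absurd (hmem.mp h2) h1
          · simp
      | inr c =>
          rw [map_mul, sumToIter_Xr, mul_comm ((sumToIter R σ₁ σ₂) f) (C (X c)), coeff_C_mul,
            mul_comm (X c), coeff_mul_X', coeff_mul_X']
          have hmem : Sum.inr c ∈ (d.sumElim e).support ↔ c ∈ e.support := by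
            simp [Finsupp.mem_support_iff]
          split_ifs with h1 h2 h2
          · rw [hf]
            congr 1
            ext (x | x) <;> simp [Finsupp.single_apply]
          · exact absurd (hmem.mpr h1) h2
          · exact absurd (hmem.mp h2) h1
          · simp

end Aux

lemma fermatExp_le (p k : ℕ) : fermatExp p k ≤ k := by
  unfold fermatExp
  split_ifs with h
  · simp [h]
  · have : (k - 1) % (p - 1) ≤ k - 1 := Nat.mod_le _ _
    omega

lemma degreeOf_fermatReduce_le {σ : Type*} (p : ℕ) (F : MvPolynomial σ (ZMod p)) (i : σ) :
    degreeOf i (fermatReduce p F) ≤ degreeOf i F := by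
  unfold fermatReduce
  refine (degreeOf_sum_le i _ _).trans (Finset.sup_le fun d hd => ?_)
  refine (aux_degreeOf_monomial_le _ _ i).trans ?_
  rw [Finsupp.mapRange_apply]
  exact (fermatExp_le p (d i)).trans (aux_mem_support_le_degreeOf hd i)

lemma degreeOf_vCoeff_le {n m p : ℕ} (F : MvPolynomial (Fin n ⊕ Fin m) (ZMod p))
    (d : Fin n →₀ ℕ) (k : Fin m) :
    degreeOf k (vCoeff F d) ≤ degreeOf (Sum.inr k) F := by
  refine degreeOf_le_iff.mpr fun e he => ?_
  rw [mem_support_iff] at he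
  have hs : ∀ G : MvPolynomial (Fin n ⊕ Fin m) (ZMod p),
      ((sumAlgEquiv (ZMod p) (Fin n) (Fin m)) G) = sumToIter (ZMod p) (Fin n) (Fin m) G := by
    intro G
    induction G using MvPolynomial.induction_on with
    | C a => rw [sumAlgEquiv_C_inl, sumToIter_C]
    | add f g hf hg => rw [map_add, map_add, hf, hg]
    | mul_X f j hf =>
        cases j with
        | inl b => rw [map_mul, map_mul, hf, sumAlgEquiv_X_inl, sumToIter_Xl]
        | inr c => rw [map_mul, map_mul, hf, sumAlgEquiv_X_inr, sumToIter_Xr]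
  rw [vCoeff, hs] at he
  rw [show coeff e (coeff d (sumToIter (ZMod p) (Fin n) (Fin m) F))
      = coeff (d.sumElim e) F from aux_coeff_coeff_sumToIter F d e] at he
  have := aux_mem_support_le_degreeOf (mem_support_iff.mpr he) (Sum.inr k)
  simpa using this


lemma card_endpoints {n m : ℕ} (ed : Fin m → Sym2 (Fin n)) (k : Fin m)
    (hk : ¬ (ed k).IsDiag) :
    (Finset.univ.filter fun i : Fin n => i ∈ ed k).card = 2 := by
  obtain ⟨⟨x, y⟩, hxy⟩ := Quot.exists_rep (ed k)
  have hxy' : ed k = s(x, y) := hxy.symm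
  have hne : x ≠ y := by
    intro h
    exact hk (by rw [hxy', h]; exact Sym2.mk_isDiag_iff.mpr rfl)
  have : (Finset.univ.filter fun i : Fin n => i ∈ ed k) = {x, y} := by
    ext a
    simp [hxy', Sym2.mem_iff]
  rw [this, Finset.card_pair hne]

lemma degreeOf_Ppoly_le (n m Δ p : ℕ) [Fact p.Prime] (ed : Fin m → Sym2 (Fin n))
    (hsimple : ∀ k, ¬ (ed k).IsDiag) (k : Fin m) :
    degreeOf (Sum.inr k) (Ppoly n m Δ p ed) ≤ 2 := by
  unfold Ppoly
  refine (degreeOf_prod_le _ _ _).trans ?_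
  have hbound : ∀ i : Fin n,
      degreeOf (Sum.inr k)
        ((∏ j ∈ laterNbrs ed i, (X (Sum.inl i) - X (Sum.inl j))) *
          (∏ k' ∈ incidentE ed i, (X (Sum.inl i) - X (Sum.inr k'))) *
          (∏ l ∈ Finset.Icc (Δ + 2) p, (X (Sum.inl i) - C (l : ZMod p)))) ≤
        if i ∈ ed k then 1 else 0 := by
    intro i
    refine (degreeOf_mul_le _ _ _).trans ?_
    refine le_trans (add_le_add (degreeOf_mul_le _ _ _) le_rfl) ?_
    have hA : degreeOf (Sum.inr k) (∏ j ∈ laterNbrs ed i,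
        ((X (Sum.inl i) : MvPolynomial (Fin n ⊕ Fin m) (ZMod p)) - X (Sum.inl j))) = 0 := by
      refine Nat.le_zero.mp ((degreeOf_prod_le _ _ _).trans ?_)
      refine le_trans (Finset.sum_le_sum fun j _ => aux_degreeOf_X_sub_X_le _ _ _) ?_
      simp
    have hC : degreeOf (Sum.inr k) (∏ l ∈ Finset.Icc (Δ + 2) p,
        ((X (Sum.inl i) : MvPolynomial (Fin n ⊕ Fin m) (ZMod p)) - C (l : ZMod p))) = 0 := by
      refine Nat.le_zero.mp ((degreeOf_prod_le _ _ _).trans ?_)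
      refine le_trans (Finset.sum_le_sum fun l _ => aux_degreeOf_X_sub_C_le _ _ _) ?_
      simp
    have hB : degreeOf (Sum.inr k) (∏ k' ∈ incidentE ed i,
        ((X (Sum.inl i) : MvPolynomial (Fin n ⊕ Fin m) (ZMod p)) - X (Sum.inr k'))) ≤
        if i ∈ ed k then 1 else 0 := by
      refine (degreeOf_prod_le _ _ _).trans ?_
      refine le_trans (Finset.sum_le_sum fun k' _ => aux_degreeOf_X_sub_X_le _ _ _) ?_
      refine le_trans (Finset.sum_le_sum
          (g := fun k' : Fin m => if k = k' then 1 else 0) fun k' _ => ?_) ?_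
      · rcases eq_or_ne k k' with rfl | h
        · split_ifs <;> simp_all
        · have h1 : ¬((Sum.inr k : Fin n ⊕ Fin m) = Sum.inl i ∨
              (Sum.inr k : Fin n ⊕ Fin m) = Sum.inr k') := by
            rintro (h2 | h2)
            · exact absurd h2 (by simp)
            · exact h (Sum.inr.inj h2)
          rw [if_neg h1]
          exact Nat.zero_le _
      · rw [Finset.sum_ite_eq (incidentE ed i) k (fun _ => 1)]
        simp only [incidentE, Finset.mem_filter, Finset.mem_univ, true_and]
        split_ifs <;> simp_all
    rw [hA, hC]
    simpa using hB
  refine le_trans (Finset.sum_le_sum fun i _ => hbound i) ?_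
  rw [← Finset.card_filter]
  rw [card_endpoints ed k (hsimple k)]


lemma aux_ite_irrel {α : Type*} (P : Prop) (h1 h2 : Decidable P) (x y : α) :
    @ite α P h1 x y = @ite α P h2 x y := by
  congr

lemma aux_degreeOf_vdm_le {σ R : Type*} [CommRing R] [Nontrivial R] [LinearOrder σ]
    (S : Finset σ) (k : σ) :
    degreeOf k (∏ a ∈ S, ∏ b ∈ S.filter (fun b => a < b), (X a - X b : MvPolynomial σ R)) ≤
      if k ∈ S then S.card - 1 else 0 := by
  classical
  refine le_trans (degreeOf_prod_le _ _ _) ?_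
  have hinner : ∀ a ∈ S, degreeOf k (∏ b ∈ S.filter (fun b => a < b),
      (X a - X b : MvPolynomial σ R)) ≤
      if a = k then (S.filter (fun b => k < b)).card
      else if a < k ∧ k ∈ S then 1 else 0 := by
    intro a _
    refine le_trans (degreeOf_prod_le _ _ _) ?_
    refine le_trans (Finset.sum_le_sum
        (g := fun b => if k = a ∨ k = b then 1 else 0)
        (fun b _ => (aux_degreeOf_X_sub_X_le k a b).trans_eq (aux_ite_irrel _ _ _ _ _))) ?_
    rcases eq_or_ne a k with rfl | hak
    · rw [if_pos rfl]
      refine le_of_eq ?_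
      rw [Finset.sum_congr rfl (fun b _ => if_pos (Or.inl rfl))]
      simp
    · rw [if_neg hak]
      have : ∀ b ∈ S.filter (fun b => a < b),
          ((if k = a ∨ k = b then 1 else 0) : ℕ) = if b = k then 1 else 0 := by
        intro b _
        rcases eq_or_ne b k with rfl | hbk
        · rw [if_pos rfl, if_pos (Or.inr rfl)]
        · rw [if_neg hbk, if_neg]
          rintro (h | h)
          · exact hak h.symm
          · exact hbk h.symm
      rw [Finset.sum_congr rfl this, Finset.sum_ite_eq' (S.filter fun b => a < b) k fun _ => 1]
      simp only [Finset.mem_filter]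
      split_ifs with h1 h2 <;>
        first
          | exact le_rfl
          | exact Nat.zero_le _
          | exact absurd ⟨h1.2, h1.1⟩ h2
  refine le_trans (Finset.sum_le_sum hinner) ?_
  by_cases hk : k ∈ S
  · rw [if_pos hk]
    rw [← Finset.add_sum_erase S _ hk, if_pos rfl]
    have h2 : ∑ a ∈ S.erase k, (if a = k then (S.filter (fun b => k < b)).card
        else if a < k ∧ k ∈ S then 1 else 0) ≤ ((S.erase k).filter (fun a => a < k)).card := by
      refine le_trans (Finset.sum_le_sum (g := fun a => if a < k then 1 else 0)
          (fun a ha => ?_)) (le_of_eq (Finset.card_filter _ _).symm)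
      rw [if_neg (Finset.mem_erase.mp ha).1]
      by_cases h1 : a < k ∧ k ∈ S
      · rw [if_pos h1]
        simp [h1.1]
      · rw [if_neg h1]
        exact Nat.zero_le _
    refine le_trans (add_le_add le_rfl h2) ?_
    have hfil : S.filter (fun b => k < b) = (S.erase k).filter (fun b => k < b) := by
      ext b
      simp only [Finset.mem_filter, Finset.mem_erase]
      constructor
      · rintro ⟨hb, hlt⟩; exact ⟨⟨ne_of_gt hlt, hb⟩, hlt⟩
      · rintro ⟨⟨_, hb⟩, hlt⟩; exact ⟨hb, hlt⟩
    rw [hfil]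
    have hdisj : Disjoint ((S.erase k).filter (fun b => k < b))
        ((S.erase k).filter (fun a => a < k)) := by
      rw [Finset.disjoint_left]
      intro a ha hb
      have h1 := (Finset.mem_filter.mp ha).2
      have h2 := (Finset.mem_filter.mp hb).2
      exact absurd h1 (not_lt_of_gt h2)
    rw [← Finset.card_union_of_disjoint hdisj]
    refine le_trans (Finset.card_le_card (t := S.erase k)
      (Finset.union_subset (Finset.filter_subset _ _) (Finset.filter_subset _ _))) ?_
    rw [Finset.card_erase_of_mem hk]
  · rw [if_neg hk]
    refine le_of_eq (Finset.sum_eq_zero fun a ha => ?_)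
    rw [if_neg (by rintro rfl; exact hk ha), if_neg (by rintro ⟨_, h⟩; exact hk h)]

lemma aux_degreeOf_linprod_le {σ R : Type*} [CommRing R] [Nontrivial R] [DecidableEq σ]
    (S : Finset σ) (T : Finset ℕ) (g : ℕ → R) (k : σ) :
    degreeOf k (∏ a ∈ S, ∏ l ∈ T, (X a - C (g l) : MvPolynomial σ R)) ≤
      if k ∈ S then T.card else 0 := by
  refine le_trans (degreeOf_prod_le _ _ _) ?_
  have hinner : ∀ a ∈ S, degreeOf k (∏ l ∈ T, (X a - C (g l) : MvPolynomial σ R)) ≤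
      if a = k then T.card else 0 := by
    intro a _
    refine le_trans (degreeOf_prod_le _ _ _) ?_
    refine le_trans (Finset.sum_le_sum (g := fun _ : ℕ => if k = a then 1 else 0)
        (fun l _ => (aux_degreeOf_X_sub_C_le k a (g l)).trans_eq (aux_ite_irrel _ _ _ _ _))) ?_
    rcases eq_or_ne a k with rfl | hak
    · rw [if_pos rfl]
      refine le_trans (Finset.sum_le_sum (g := fun _ : ℕ => 1)
          (fun l _ => le_of_eq (by simp))) ?_
      simp
    · rw [if_neg hak]
      exact le_of_eq (Finset.sum_eq_zero fun l _ => if_neg fun h => hak h.symm)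
  refine le_trans (Finset.sum_le_sum hinner) ?_
  exact le_of_eq (Finset.sum_ite_eq' S k fun _ => T.card)

lemma aux_X_sub_C_ne_zero {σ R : Type*} [CommRing R] [Nontrivial R] (a : σ) (c : R) :
    (X a - C c : MvPolynomial σ R) ≠ 0 := by
  intro h
  have h2 : (X a : MvPolynomial σ R) = C c := by
    rwa [sub_eq_zero] at h
  have h3 := congrArg (coeff (Finsupp.single a 1)) h2
  rw [coeff_X, coeff_C, if_pos rfl, if_neg (fun h => by
    have := DFunLike.congr_fun h a
    simp at this)] at h3
  exact one_ne_zero h3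

/-- Remark 3.3 of the paper. For every edge `e_i = {v_s, v_t}` (labelled so
that `|N(v_s)| ≥ |N(v_t)|`), with `S_i = N_e(v_s)`, the polynomial
`Z_i = C^{P'}(e) · ∏_{j<k} (e_{l_j} - e_{l_k}) · ∏_{j} ∏_{l=Δ+3}^{p} (e_{l_j} - l)`
does not vanish at every point of `Z_p^m` (equivalently, its Fermat reduction is nonzero). -/
theorem statement2 (n m Δ p : ℕ) [Fact p.Prime]
    (hm : 1 ≤ m) (hp : m ^ 2 * (2 * Δ + 2) ≤ p)
    (ed : Fin m → Sym2 (Fin n)) (hinj : Function.Injective ed)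
    (hsimple : ∀ k, ¬ (ed k).IsDiag)
    (hΔ : ∀ i, (incidentE ed i).card ≤ Δ)
    (hΔmax : ∃ i, (incidentE ed i).card = Δ)
    (d : Fin n →₀ ℕ) (CP : MvPolynomial (Fin m) (ZMod p))
    (hCP : CP = vCoeff (fermatReduce p (Ppoly n m Δ p ed)) d) (hCP0 : CP ≠ 0)
    (i : Fin m) (s t : Fin n) (hi : ed i = s(s, t))
    (hst : (incidentE ed t).card ≤ (incidentE ed s).card) :
    ∃ γ : Fin m → ZMod p,
      eval γ (CP *
        (∏ a ∈ incidentE ed s, ∏ b ∈ (incidentE ed s).filter (fun b => a < b), (X a - X b)) *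
        ∏ a ∈ incidentE ed s, ∏ l ∈ Finset.Icc (Δ + 3) p, (X a - C (l : ZMod p))) ≠ 0 := by
  by_contra hco
  push_neg at hco
  set V := (∏ a ∈ incidentE ed s, ∏ b ∈ (incidentE ed s).filter (fun b => a < b),
      (X a - X b : MvPolynomial (Fin m) (ZMod p))) with hV
  set L := (∏ a ∈ incidentE ed s, ∏ l ∈ Finset.Icc (Δ + 3) p,
      (X a - C (l : ZMod p) : MvPolynomial (Fin m) (ZMod p))) with hL
  have hmemS : i ∈ incidentE ed s := by
    simp only [incidentE, Finset.mem_filter, Finset.mem_univ, true_and, hi]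
    exact Sym2.mem_mk_left s t
  have hS1 : 1 ≤ (incidentE ed s).card := Finset.card_pos.mpr ⟨i, hmemS⟩
  have hSΔ : (incidentE ed s).card ≤ Δ := hΔ s
  have hpge : 2 * Δ + 2 ≤ p :=
    le_trans (Nat.le_mul_of_pos_left (2 * Δ + 2) (pow_pos hm 2)) hp
  have hCPdeg : ∀ j : Fin m, degreeOf j CP ≤ 2 := fun j => by
    rw [hCP]
    exact (degreeOf_vCoeff_le _ _ _).trans ((degreeOf_fermatReduce_le _ _ _).trans
      (degreeOf_Ppoly_le n m Δ p ed hsimple j))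
  have hdeg : ∀ j : Fin m, degreeOf j (CP * V * L) ≤ p - 1 := by
    intro j
    refine le_trans (degreeOf_mul_le _ _ _) ?_
    refine le_trans (add_le_add (degreeOf_mul_le _ _ _) le_rfl) ?_
    have h1 := hCPdeg j
    have h2 := aux_degreeOf_vdm_le (R := ZMod p) (incidentE ed s) j
    have h3 := aux_degreeOf_linprod_le (R := ZMod p) (incidentE ed s) (Finset.Icc (Δ + 3) p)
      (fun l => (l : ZMod p)) j
    rw [Nat.card_Icc] at h3
    rw [← hV] at h2
    rw [← hL] at h3
    by_cases hjS : j ∈ incidentE ed s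
    · rw [if_pos hjS] at h2 h3
      omega
    · rw [if_neg hjS] at h2 h3
      omega
  have hZ0 : CP * V * L = 0 := by
    refine MvPolynomial.eq_zero_of_eval_eq_zero (σ := Fin m) (K := ZMod p) _ hco ?_
    rw [mem_restrictDegree]
    intro u hu j
    refine le_trans (aux_mem_support_le_degreeOf hu j) ?_
    rw [ZMod.card p]
    exact hdeg j
  have hVne : V ≠ 0 := by
    rw [hV]
    refine Finset.prod_ne_zero_iff.mpr fun a _ => Finset.prod_ne_zero_iff.mpr fun b hb => ?_
    refine sub_ne_zero.mpr fun h => ?_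
    have hab := MvPolynomial.X_injective h
    exact absurd hab (ne_of_lt (Finset.mem_filter.mp hb).2)
  have hLne : L ≠ 0 := by
    rw [hL]
    exact Finset.prod_ne_zero_iff.mpr fun a _ => Finset.prod_ne_zero_iff.mpr fun l _ =>
      aux_X_sub_C_ne_zero a _
  exact (mul_ne_zero (mul_ne_zero hCP0 hVne) hLne) hZ0

end
end
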